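/- The canonical odometer factor map: let 𝕂 be an odometer based system with coefficients (k_n) and S ⊆ 𝕂 as below. For every s ∈ S and every n, the location r_n(s) exists and satisfies r_{n+1}(s) ≡ r_n(s) (mod K_n); consequently the map π: S → O sending s to the unique element of the odometer O whose n-th coordinate is r_n(s) mod K_n is well defined, and π(sh(s)) = π(s) + 1 for every s ∈ S, where +1 denotes the odometer transformation (addition of 1). -/

import Mathlib

/-!
STATEMENT 12: The canonical odometer factor map of an odometer based system.
-/

namespace Stmt12

/-- The shift on `A^ℤ`. -/
def sh {A : Type*} (x : ℤ → A) : ℤ → A := fun n => x (n + 1)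

/-- The finite contiguous subword of `x` on `[a, a + len)`. -/
def subword {A : Type*} (x : ℤ → A) (a : ℤ) (len : ℕ) : List A :=
  (List.range len).map fun t => x (a + t)

/-- Unique readability. -/
def UniquelyReadable {A : Type*} (W : Set (List A)) : Prop :=
  ∀ u ∈ W, ∀ v ∈ W, ∀ w ∈ W, ∀ α β : List A, u ++ v = α ++ w ++ β → α = [] ∨ β = []

/-- The symbolic system `𝕂` associated with `W`. -/
def Kset {A : Type*} (W : ℕ → Set (List A)) : Set (ℤ → A) :=
  {x | ∀ (a : ℤ) (len : ℕ), ∃ n, ∃ w ∈ W n, subword x a len <:+: w}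

/-- The set `S ⊆ 𝕂` of doubly-parsed points. -/
def Sset {A : Type*} (W : ℕ → Set (List A)) : Set (ℤ → A) :=
  {x | x ∈ Kset W ∧ ∃ a b : ℕ → ℕ,
    Filter.Tendsto a Filter.atTop Filter.atTop ∧
    Filter.Tendsto b Filter.atTop Filter.atTop ∧
    ∀ m, ∃ n, subword x (-(a m : ℤ)) (a m + b m) ∈ W n}

/-- `K_0 = 1`, `K_{n+1} = K_n k_n`: lengths of the words of `W_n`. -/
def KSeq (k : ℕ → ℕ) : ℕ → ℕ
  | 0 => 1
  | n + 1 => KSeq k n * k n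

/-- `r` is a location of `s` at stage `n`: `0 ≤ r < K_n` and `s↾[−r, K_n − r) ∈ W_n`. -/
def IsLoc {A : Type*} (W : ℕ → Set (List A)) (k : ℕ → ℕ) (s : ℤ → A) (n r : ℕ) : Prop :=
  r < KSeq k n ∧ subword s (-(r : ℤ)) (KSeq k n) ∈ W n

section Aux

variable {A : Type*}

lemma subword_eq (x : ℤ → A) (a : ℤ) (len : ℕ) :
    subword x a len = (List.range len).map (fun t : ℕ => x (a + (t : ℤ))) := by
  unfold subword
  simp [List.map_flatMap]
  rw [← List.map_eq_flatMap]

lemma subword_length (x : ℤ → A) (a : ℤ) (len : ℕ) : (subword x a len).length = len := by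
  rw [subword_eq, List.length_map, List.length_range]

lemma subword_append (x : ℤ → A) (a : ℤ) (m n : ℕ) :
    subword x a (m + n) = subword x a m ++ subword x (a + m) n := by
  rw [subword_eq, subword_eq, subword_eq, List.range_add, List.map_append, List.map_map]
  congr 1
  apply List.map_congr_left
  intro t _
  show x (a + ((m + t : ℕ) : ℤ)) = x ((a + (m : ℤ)) + (t : ℤ))
  congr 1
  push_cast
  ring

lemma subword_drop_take (x : ℤ → A) (a : ℤ) {i m len : ℕ} (h : i + m ≤ len) :
    ((subword x a len).drop i).take m = subword x (a + i) m := by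
  have hlen : len = i + (m + (len - i - m)) := by omega
  rw [hlen, subword_append, subword_append,
    List.drop_left' (subword_length x a i),
    List.take_left' (subword_length x (a + i) m)]

lemma subword_sh (x : ℤ → A) (a : ℤ) (len : ℕ) :
    subword (sh x) a len = subword x (a + 1) len := by
  rw [subword_eq, subword_eq]
  apply List.map_congr_left
  intro t _
  show x ((a + (t : ℤ)) + 1) = x ((a + 1) + (t : ℤ))
  congr 1
  ring

lemma KSeq_pos {k : ℕ → ℕ} (hk : ∀ n, 2 ≤ k n) : ∀ n, 0 < KSeq k n
  | 0 => one_pos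
  | n + 1 => Nat.mul_pos (KSeq_pos hk n) (by have := hk n; omega)

lemma KSeq_mono {k : ℕ → ℕ} (hk : ∀ n, 2 ≤ k n) : Monotone (KSeq k) := by
  apply monotone_nat_of_le_succ
  intro n
  have h1 := hk n
  calc KSeq k n = KSeq k n * 1 := (mul_one _).symm
  _ ≤ KSeq k n * k n := Nat.mul_le_mul_left _ (by omega)

lemma KSeq_dvd {k : ℕ → ℕ} {n N : ℕ} (h : n ≤ N) : KSeq k n ∣ KSeq k N := by
  induction N with
  | zero => obtain rfl := Nat.le_zero.mp h; exact dvd_rfl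
  | succ N ih =>
    by_cases hn : n = N + 1
    · subst hn; exact dvd_rfl
    · exact dvd_mul_of_dvd_left (ih (by omega)) (k N)

lemma mod_eq_of_dvd_sub {K a r : ℕ} (h : K ∣ a - r) (hr : r < K) (hra : r ≤ a) : a % K = r := by
  obtain ⟨c, hc⟩ := h
  have ha : a = K * c + r := by omega
  rw [ha, Nat.mul_add_mod, Nat.mod_eq_of_lt hr]

variable {k : ℕ → ℕ} {W : ℕ → Set (List A)}

lemma Wlen (hW0 : W 0 = {w : List A | ∃ a : A, w = [a]})
    (hWsucc : ∀ n, ∀ w ∈ W (n + 1), ∃ f : Fin (k n) → List A,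
      (∀ i, f i ∈ W n) ∧ w = (List.ofFn f).flatten) :
    ∀ n, ∀ w ∈ W n, w.length = KSeq k n := by
  intro n
  induction n with
  | zero =>
    intro w hw
    rw [hW0] at hw
    obtain ⟨a, rfl⟩ := hw
    rfl
  | succ n ih =>
    intro w hw
    obtain ⟨f, hf, rfl⟩ := hWsucc n w hw
    rw [List.length_flatten]
    have hmap : (List.ofFn f).map List.length = List.replicate (k n) (KSeq k n) := by
      have h1 : ((List.ofFn f).map List.length)
          = List.replicate ((List.ofFn f).map List.length).length (KSeq k n) := by
        apply List.eq_replicate_of_mem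
        intro b hb
        obtain ⟨w', hw', rfl⟩ := List.mem_map.mp hb
        obtain ⟨i, rfl⟩ := List.mem_ofFn.mp hw'
        exact ih _ (hf i)
      rwa [List.length_map, List.length_ofFn] at h1
    rw [hmap, List.sum_replicate, smul_eq_mul]
    show k n * KSeq k n = KSeq k n * k n
    ring

lemma block_one
    (hWsucc : ∀ n, ∀ w ∈ W (n + 1), ∃ f : Fin (k n) → List A,
      (∀ i, f i ∈ W n) ∧ w = (List.ofFn f).flatten)
    (hlen : ∀ n, ∀ w ∈ W n, w.length = KSeq k n)
    (n : ℕ) (w : List A) (hw : w ∈ W (n + 1)) (q : ℕ) (hq : q < k n) :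
    (w.drop (q * KSeq k n)).take (KSeq k n) ∈ W n := by
  obtain ⟨f, hf, rfl⟩ := hWsucc n w hw
  have hmap : (List.ofFn f).map List.length = List.replicate (k n) (KSeq k n) := by
    have h1 : ((List.ofFn f).map List.length)
        = List.replicate ((List.ofFn f).map List.length).length (KSeq k n) := by
      apply List.eq_replicate_of_mem
      intro b hb
      obtain ⟨w', hw', rfl⟩ := List.mem_map.mp hb
      obtain ⟨i, rfl⟩ := List.mem_ofFn.mp hw'
      exact hlen n _ (hf i)
    rwa [List.length_map, List.length_ofFn] at h1
  have hsum : (((List.ofFn f).map List.length).take q).sum = q * KSeq k n := by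
    rw [hmap, List.take_replicate, List.sum_replicate, smul_eq_mul,
      min_eq_left hq.le]
  have hdrop : (List.ofFn f).flatten.drop (q * KSeq k n) = ((List.ofFn f).drop q).flatten := by
    rw [← hsum, List.drop_sum_flatten]
  rw [hdrop]
  have hq' : q < (List.ofFn f).length := by simpa using hq
  rw [List.drop_eq_getElem_cons hq', List.flatten_cons, List.getElem_ofFn,
    List.take_left' (hlen n _ (hf _))]
  exact hf _

lemma block_mem
    (hWsucc : ∀ n, ∀ w ∈ W (n + 1), ∃ f : Fin (k n) → List A,
      (∀ i, f i ∈ W n) ∧ w = (List.ofFn f).flatten)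
    (hlen : ∀ n, ∀ w ∈ W n, w.length = KSeq k n)
    (hk : ∀ n, 2 ≤ k n) :
    ∀ N n, n ≤ N → ∀ w ∈ W N, ∀ i, KSeq k n ∣ i → i + KSeq k n ≤ KSeq k N →
      (w.drop i).take (KSeq k n) ∈ W n := by
  intro N
  induction N with
  | zero =>
    intro n hn w hw i hdvd hle
    obtain rfl : n = 0 := Nat.le_zero.mp hn
    have hK : KSeq k 0 = 1 := rfl
    obtain rfl : i = 0 := by omega
    rw [List.drop_zero, List.take_of_length_le (le_of_eq (hlen 0 w hw))]
    exact hw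
  | succ N ih =>
    intro n hn w hw i hdvd hle
    by_cases hEq : n = N + 1
    · subst hEq
      have hK := KSeq_pos hk (N + 1)
      obtain rfl : i = 0 := by omega
      rw [List.drop_zero, List.take_of_length_le (le_of_eq (hlen _ w hw))]
      exact hw
    · have hnN : n ≤ N := by omega
      have hKpos : 0 < KSeq k n := KSeq_pos hk n
      have hKNpos : 0 < KSeq k N := KSeq_pos hk N
      have hKN1 : KSeq k (N + 1) = KSeq k N * k N := rfl
      obtain ⟨q, rem, hqrem, hremlt⟩ :
          ∃ q rem, KSeq k N * q + rem = i ∧ rem < KSeq k N :=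
        ⟨i / KSeq k N, i % KSeq k N, Nat.div_add_mod i (KSeq k N),
          Nat.mod_lt _ hKNpos⟩
      have hq : q < k N := by
        by_contra hcon
        push_neg at hcon
        have : KSeq k N * k N ≤ KSeq k N * q := Nat.mul_le_mul_left _ hcon
        omega
      have hKrem : KSeq k n ∣ rem := by
        have h1 : KSeq k n ∣ KSeq k N * q := (KSeq_dvd hnN).mul_right q
        have h2 : rem = i - KSeq k N * q := by omega
        rw [h2]
        exact Nat.dvd_sub hdvd h1
      have hremK : rem + KSeq k n ≤ KSeq k N := by
        obtain ⟨c, hc⟩ := hKrem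
        obtain ⟨d, hd⟩ := (KSeq_dvd hnN : KSeq k n ∣ KSeq k N)
        have hcd : c < d := by
          have : KSeq k n * c < KSeq k n * d := by omega
          exact lt_of_mul_lt_mul_left this (Nat.zero_le _)
        have : KSeq k n * (c + 1) ≤ KSeq k n * d := Nat.mul_le_mul_left _ hcd
        have hmul : KSeq k n * (c + 1) = KSeq k n * c + KSeq k n := by ring
        omega
      have hu : ((w.drop (q * KSeq k N)).take (KSeq k N)) ∈ W N :=
        block_one hWsucc hlen N w hw q hq
      have ih' := ih n hnN _ hu rem hKrem hremK
      have key : ((((w.drop (q * KSeq k N)).take (KSeq k N)).drop rem).take (KSeq k n))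
          = (w.drop i).take (KSeq k n) := by
        rw [List.drop_take, List.take_take, min_eq_left (by omega : KSeq k n ≤ KSeq k N - rem),
          List.drop_drop]
        congr 2
        have hc : q * KSeq k N = KSeq k N * q := mul_comm _ _
        omega
      rwa [key] at ih'

lemma loc_of_bigword
    (hWsucc : ∀ n, ∀ w ∈ W (n + 1), ∃ f : Fin (k n) → List A,
      (∀ i, f i ∈ W n) ∧ w = (List.ofFn f).flatten)
    (hlen : ∀ n, ∀ w ∈ W n, w.length = KSeq k n)
    (hk : ∀ n, 2 ≤ k n)
    {s : ℤ → A} {a b N n j r : ℕ}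
    (hw : subword s (-(a : ℤ)) (a + b) ∈ W N) (hn : n ≤ N)
    (hjr : j + r = a) (hrK : r < KSeq k n) (hdvd : KSeq k n ∣ j)
    (hjb : j + KSeq k n ≤ a + b) :
    IsLoc W k s n r := by
  have hab : a + b = KSeq k N := by rw [← hlen N _ hw, subword_length]
  have h1 := block_mem hWsucc hlen hk N n hn _ hw j hdvd (hab ▸ hjb)
  rw [subword_drop_take _ _ hjb] at h1
  have harith : -(a : ℤ) + (j : ℕ) = -((r : ℕ) : ℤ) := by omega
  rw [harith] at h1
  exact ⟨hrK, h1⟩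

lemma loc_rigid
    (hWsucc : ∀ n, ∀ w ∈ W (n + 1), ∃ f : Fin (k n) → List A,
      (∀ i, f i ∈ W n) ∧ w = (List.ofFn f).flatten)
    (hlen : ∀ n, ∀ w ∈ W n, w.length = KSeq k n)
    (hk : ∀ n, 2 ≤ k n)
    (hUR : ∀ n, UniquelyReadable (W n))
    {s : ℤ → A} {a b N n r : ℕ}
    (hw : subword s (-(a : ℤ)) (a + b) ∈ W N)
    (ha : KSeq k n ≤ a) (hb : 2 * KSeq k n ≤ b)
    (hr : IsLoc W k s n r) :
    a % KSeq k n = r := by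
  have hKpos : 0 < KSeq k n := KSeq_pos hk n
  have hab : a + b = KSeq k N := by rw [← hlen N _ hw, subword_length]
  have hn : n ≤ N := by
    by_contra hcon
    push_neg at hcon
    have : KSeq k N ≤ KSeq k n := KSeq_mono hk hcon.le
    omega
  have hrK : r < KSeq k n := hr.1
  have hra : r ≤ a := le_trans hrK.le ha
  obtain ⟨j, δ, hjδ, hδK, hjdvd⟩ :
      ∃ j δ, j + δ = a - r ∧ δ < KSeq k n ∧ KSeq k n ∣ j :=
    ⟨(a - r) / KSeq k n * KSeq k n, (a - r) % KSeq k n,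
      Nat.div_add_mod' (a - r) (KSeq k n), Nat.mod_lt _ hKpos,
      dvd_mul_left _ _⟩
  apply mod_eq_of_dvd_sub _ hrK hra
  by_cases hδ0 : δ = 0
  · have hj : j = a - r := by omega
    exact hj ▸ hjdvd
  · exfalso
    have hδpos : 0 < δ := Nat.pos_of_ne_zero hδ0
    have hja : j ≤ a := by omega
    have hu1 : subword s (-(a : ℤ) + (j : ℕ)) (KSeq k n) ∈ W n := by
      have h1 := block_mem hWsucc hlen hk N n hn _ hw j hjdvd (by omega)
      rwa [subword_drop_take _ _ (by omega : j + KSeq k n ≤ a + b)] at h1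
    have hu2 : subword s ((-(a : ℤ) + (j : ℕ)) + (KSeq k n : ℕ)) (KSeq k n) ∈ W n := by
      have h1 := block_mem hWsucc hlen hk N n hn _ hw (j + KSeq k n)
        (hjdvd.add dvd_rfl) (by omega)
      rwa [subword_drop_take _ _ (by omega : (j + KSeq k n) + KSeq k n ≤ a + b),
        (by push_cast; ring : -(a : ℤ) + ((j + KSeq k n : ℕ) : ℤ)
          = (-(a : ℤ) + (j : ℕ)) + (KSeq k n : ℕ))] at h1
    have hmid : (-(a : ℤ) + (j : ℕ)) + (δ : ℕ) = -((r : ℕ) : ℤ) := by omega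
    have h2K : KSeq k n + KSeq k n = δ + (KSeq k n + (KSeq k n - δ)) := by omega
    have hEq : subword s (-(a : ℤ) + (j : ℕ)) (KSeq k n)
          ++ subword s ((-(a : ℤ) + (j : ℕ)) + (KSeq k n : ℕ)) (KSeq k n)
        = (subword s (-(a : ℤ) + (j : ℕ)) δ ++ subword s (-((r : ℕ) : ℤ)) (KSeq k n))
          ++ subword s (-((r : ℕ) : ℤ) + (KSeq k n : ℕ)) (KSeq k n - δ) := by
      rw [← subword_append, h2K, subword_append, subword_append, hmid]
      exact (List.append_assoc _ _ _).symm
    rcases hUR n _ hu1 _ hu2 _ hr.2 _ _ hEq with h | h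
    · have := congrArg List.length h
      rw [subword_length] at this
      simp at this
      omega
    · have := congrArg List.length h
      rw [subword_length] at this
      simp at this
      omega

lemma bigword {s : ℤ → A} (hs : s ∈ Sset W) (c1 c2 : ℕ) :
    ∃ a b N, c1 ≤ a ∧ c2 ≤ b ∧ subword s (-(a : ℤ)) (a + b) ∈ W N := by
  obtain ⟨-, a, b, ha, hb, hab⟩ := hs
  obtain ⟨m, h1, h2⟩ :=
    ((ha.eventually_ge_atTop c1).and (hb.eventually_ge_atTop c2)).exists
  obtain ⟨N, hN⟩ := hab m
  exact ⟨a m, b m, N, h1, h2, hN⟩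

end Aux

/-- The canonical odometer factor: for an odometer based system `𝕂` with coefficients `k_n`,
for every `s ∈ S` and `n` the location `r_n(s)` exists (and is unique), and
`r_{n+1}(s) ≡ r_n(s) (mod K_n)`; consequently the map `π : S → O` into the odometer `O`
(the inverse limit of the `ℤ/K_nℤ`, realized as coherent sequences in `∀ n, ZMod (K_n)`)
sending `s` to the sequence `(r_n(s) mod K_n)_n` is well defined, and `π(sh s) = π(s) + 1`. -/
theorem canonical_odometer_factor
    {A : Type*} [Fintype A]
    (kseq : ℕ → ℕ) (hk : ∀ n, 2 ≤ kseq n)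
    (W : ℕ → Set (List A))
    (hW0 : W 0 = {w : List A | ∃ a : A, w = [a]})
    (hWsucc : ∀ n, ∀ w ∈ W (n + 1), ∃ f : Fin (kseq n) → List A,
      (∀ i, f i ∈ W n) ∧ w = (List.ofFn f).flatten)
    (hUR : ∀ n, UniquelyReadable (W n)) :
    (∀ s ∈ Sset W, ∀ n, ∃ r, IsLoc W kseq s n r) ∧
    (∀ s ∈ Sset W, ∀ n, ∀ r r', IsLoc W kseq s n r → IsLoc W kseq s n r' → r = r') ∧
    (∀ s ∈ Sset W, ∀ n, ∀ r r', IsLoc W kseq s n r → IsLoc W kseq s (n + 1) r' →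
      r' % KSeq kseq n = r) ∧
    (∃ π : (ℤ → A) → ∀ n, ZMod (KSeq kseq n),
      (∀ s ∈ Sset W, ∀ n, ∀ r, IsLoc W kseq s n r → π s n = (r : ZMod (KSeq kseq n))) ∧
      (∀ s ∈ Sset W, ∀ n, (((π s (n + 1)).val : ℕ) : ZMod (KSeq kseq n)) = π s n) ∧
      (∀ s ∈ Sset W, ∀ n, π (sh s) n = π s n + 1)) := by
  classical
  have hlen := Wlen hW0 hWsucc
  -- Part 1: existence
  have hex : ∀ s ∈ Sset W, ∀ n, ∃ r, IsLoc W kseq s n r := by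
    intro s hs n
    have hKpos : 0 < KSeq kseq n := KSeq_pos hk n
    obtain ⟨a, b, N, ha, hb, hw⟩ := bigword hs (KSeq kseq n) (2 * KSeq kseq n)
    have hab : a + b = KSeq kseq N := by rw [← hlen N _ hw, subword_length]
    have hn : n ≤ N := by
      by_contra hcon
      push_neg at hcon
      have : KSeq kseq N ≤ KSeq kseq n := KSeq_mono hk hcon.le
      omega
    refine ⟨a % KSeq kseq n, loc_of_bigword hWsucc hlen hk hw hn
      (Nat.div_add_mod' a (KSeq kseq n)) (Nat.mod_lt _ hKpos) (dvd_mul_left _ _) ?_⟩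
    have h1 : a / KSeq kseq n * KSeq kseq n + a % KSeq kseq n = a :=
      Nat.div_add_mod' a (KSeq kseq n)
    omega
  -- Part 2: uniqueness
  have huniq : ∀ s ∈ Sset W, ∀ n, ∀ r r',
      IsLoc W kseq s n r → IsLoc W kseq s n r' → r = r' := by
    intro s hs n r r' hr hr'
    obtain ⟨a, b, N, ha, hb, hw⟩ := bigword hs (KSeq kseq n) (2 * KSeq kseq n)
    rw [← loc_rigid hWsucc hlen hk hUR hw ha hb hr,
      ← loc_rigid hWsucc hlen hk hUR hw ha hb hr']
  -- Part 3: coherence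
  have hcoh : ∀ s ∈ Sset W, ∀ n, ∀ r r', IsLoc W kseq s n r →
      IsLoc W kseq s (n + 1) r' → r' % KSeq kseq n = r := by
    intro s hs n r r' hr hr'
    have hKpos : 0 < KSeq kseq n := KSeq_pos hk n
    have hK1 : KSeq kseq (n + 1) = KSeq kseq n * kseq n := rfl
    have hr'lt : r' < KSeq kseq (n + 1) := hr'.1
    have hw : subword s (-(r' : ℤ)) (r' + (KSeq kseq (n + 1) - r')) ∈ W (n + 1) := by
      rw [show r' + (KSeq kseq (n + 1) - r') = KSeq kseq (n + 1) by omega]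
      exact hr'.2
    have hdiv : r' / KSeq kseq n * KSeq kseq n + KSeq kseq n ≤ KSeq kseq (n + 1) := by
      have h1 : r' / KSeq kseq n < kseq n := by
        refine (Nat.div_lt_iff_lt_mul hKpos).mpr ?_
        have : kseq n * KSeq kseq n = KSeq kseq n * kseq n := mul_comm _ _
        omega
      have h2 : (r' / KSeq kseq n + 1) * KSeq kseq n ≤ kseq n * KSeq kseq n :=
        Nat.mul_le_mul_right _ h1
      have h3 : (r' / KSeq kseq n + 1) * KSeq kseq n
          = r' / KSeq kseq n * KSeq kseq n + KSeq kseq n := by ring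
      have h4 : kseq n * KSeq kseq n = KSeq kseq n * kseq n := mul_comm _ _
      omega
    have hloc : IsLoc W kseq s n (r' % KSeq kseq n) := by
      refine loc_of_bigword hWsucc hlen hk hw (Nat.le_succ n)
        (Nat.div_add_mod' r' (KSeq kseq n)) (Nat.mod_lt _ hKpos) (dvd_mul_left _ _) ?_
      omega
    exact huniq s hs n _ r hloc hr
  refine ⟨hex, huniq, hcoh, ?_⟩
  -- Part 4: the factor map
  refine ⟨fun s n => if h : ∃ r, IsLoc W kseq s n r
    then ((h.choose : ℕ) : ZMod (KSeq kseq n)) else 0, ?_, ?_, ?_⟩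
  · intro s hs n r hr
    beta_reduce
    rw [dif_pos (⟨r, hr⟩ : ∃ r, IsLoc W kseq s n r)]
    exact congrArg _ (huniq s hs n _ r (Exists.choose_spec _) hr)
  · intro s hs n
    obtain ⟨r', hr'⟩ := hex s hs (n + 1)
    obtain ⟨r, hr⟩ := hex s hs n
    beta_reduce
    have e1 : (if h : ∃ r, IsLoc W kseq s (n + 1) r
        then ((h.choose : ℕ) : ZMod (KSeq kseq (n + 1))) else 0) = (r' : ZMod (KSeq kseq (n + 1))) := by
      rw [dif_pos (⟨r', hr'⟩ : ∃ r, IsLoc W kseq s (n + 1) r)]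
      exact congrArg _ (huniq s hs (n + 1) _ r' (Exists.choose_spec _) hr')
    have e2 : (if h : ∃ r, IsLoc W kseq s n r
        then ((h.choose : ℕ) : ZMod (KSeq kseq n)) else 0) = (r : ZMod (KSeq kseq n)) := by
      rw [dif_pos (⟨r, hr⟩ : ∃ r, IsLoc W kseq s n r)]
      exact congrArg _ (huniq s hs n _ r (Exists.choose_spec _) hr)
    rw [e1, e2, ZMod.val_natCast, Nat.mod_eq_of_lt hr'.1,
      ← hcoh s hs n r r' hr hr', ZMod.natCast_mod]
  · intro s hs n
    have hKpos : 0 < KSeq kseq n := KSeq_pos hk n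
    obtain ⟨a, b, N, ha, hb, hw⟩ := bigword hs (KSeq kseq n) (2 * KSeq kseq n + 1)
    have hab : a + b = KSeq kseq N := by rw [← hlen N _ hw, subword_length]
    have hn : n ≤ N := by
      by_contra hcon
      push_neg at hcon
      have : KSeq kseq N ≤ KSeq kseq n := KSeq_mono hk hcon.le
      omega
    have hdm := Nat.div_add_mod' a (KSeq kseq n)
    have hloc : IsLoc W kseq s n (a % KSeq kseq n) :=
      loc_of_bigword hWsucc hlen hk hw hn hdm (Nat.mod_lt _ hKpos)
        (dvd_mul_left _ _) (by omega)
    have hw' : subword (sh s) (-((a + 1 : ℕ) : ℤ)) ((a + 1) + (b - 1)) ∈ W N := by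
      rw [subword_sh, show (-((a + 1 : ℕ) : ℤ) + 1) = -(a : ℤ) by push_cast; ring,
        show (a + 1) + (b - 1) = a + b by omega]
      exact hw
    have hdm' := Nat.div_add_mod' (a + 1) (KSeq kseq n)
    have hloc' : IsLoc W kseq (sh s) n ((a + 1) % KSeq kseq n) :=
      loc_of_bigword hWsucc hlen hk hw' hn hdm' (Nat.mod_lt _ hKpos)
        (dvd_mul_left _ _) (by omega)
    have hrig : ∀ r'', IsLoc W kseq (sh s) n r'' → (a + 1) % KSeq kseq n = r'' :=
      fun r'' h => loc_rigid hWsucc hlen hk hUR hw' (by omega) (by omega) h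
    beta_reduce
    rw [dif_pos (⟨_, hloc'⟩ : ∃ r, IsLoc W kseq (sh s) n r),
      dif_pos (⟨_, hloc⟩ : ∃ r, IsLoc W kseq s n r)]
    rw [← hrig _ (Exists.choose_spec _),
      huniq s hs n _ (a % KSeq kseq n) (Exists.choose_spec _) hloc]
    rw [ZMod.natCast_mod, ZMod.natCast_mod]
    push_cast
    ring

end Stmt12
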